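/- Let 𝓗 be a real Hilbert space, m > 0, and A : 𝓗 → 𝓗* a strongly monotone map with monotonicity constant m. Let R > 0 and 𝓑 = {u ∈ 𝓗 : ‖u‖ ≤ R}, and suppose the restriction of A to 𝓑 is Lipschitz continuous with Lipschitz constant M. Let f, g ∈ 𝓗* and suppose R ≥ (2/m)·‖A0 − f‖_{𝓗*} and R ≥ (2/m)·‖A0 − g‖_{𝓗*}. Then there exist unique u, v ∈ 𝓑 with Au = f and Av = g, and ‖u − v‖ ≤ (1/m)·‖f − g‖_{𝓗*}. -/

import Mathlib

open Filter Topology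
open scoped RealInnerProductSpace


private lemma aux_sqrt_lt_one {m M : ℝ} (hm : 0 < m) (hmM : m ≤ M) :
    Real.sqrt (1 - m ^ 2 / M ^ 2) < 1 := by
  have hM : (0:ℝ) < M := lt_of_lt_of_le hm hmM
  have hc0 : (0:ℝ) ≤ 1 - m ^ 2 / M ^ 2 := by
    rw [sub_nonneg, div_le_one (by positivity)]
    exact pow_le_pow_left₀ hm.le hmM 2
  have hksq := Real.sq_sqrt hc0
  have hk0 := Real.sqrt_nonneg (1 - m ^ 2 / M ^ 2)
  have hp : 0 < m ^ 2 / M ^ 2 := by positivity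
  nlinarith [hksq, hk0]

private lemma aux_sqrt_bound {m M : ℝ} (hm : 0 < m) (hmM : m ≤ M) :
    Real.sqrt (1 - m ^ 2 / M ^ 2) ≤ 1 - m ^ 2 / (2 * M ^ 2) := by
  have hM : (0:ℝ) < M := lt_of_lt_of_le hm hmM
  have hc0 : (0:ℝ) ≤ 1 - m ^ 2 / M ^ 2 := by
    rw [sub_nonneg, div_le_one (by positivity)]
    exact pow_le_pow_left₀ hm.le hmM 2
  have hksq := Real.sq_sqrt hc0
  have hk0 := Real.sqrt_nonneg (1 - m ^ 2 / M ^ 2)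
  have h1 : (0:ℝ) ≤ 1 - m ^ 2 / (2 * M ^ 2) := by
    have : m ^ 2 / (2 * M ^ 2) ≤ 1 / 2 := by
      rw [div_le_div_iff₀ (by positivity) (by norm_num)]
      nlinarith [pow_le_pow_left₀ hm.le hmM 2]
    linarith
  have hq : m ^ 2 / M ^ 2 = 2 * (m ^ 2 / (2 * M ^ 2)) := by field_simp
  have h2 : Real.sqrt (1 - m ^ 2 / M ^ 2) ^ 2 ≤ (1 - m ^ 2 / (2 * M ^ 2)) ^ 2 := by
    rw [hksq, hq]
    nlinarith [sq_nonneg (m ^ 2 / (2 * M ^ 2))]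
  nlinarith [h2, h1, hk0]

lemma exists_solution_in_ball
    {𝓗 : Type*} [NormedAddCommGroup 𝓗] [InnerProductSpace ℝ 𝓗] [CompleteSpace 𝓗]
    (m : ℝ) (hm : 0 < m) (A : 𝓗 → StrongDual ℝ 𝓗)
    (hmono : ∀ u v : 𝓗, m * ‖u - v‖ ^ 2 ≤ (A u - A v) (u - v))
    (R : ℝ) (hR : 0 < R) (M : ℝ) (hmM : m ≤ M)
    (hlip : ∀ u v : 𝓗, ‖u‖ ≤ R → ‖v‖ ≤ R → ‖A u - A v‖ ≤ M * ‖u - v‖)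
    (f : StrongDual ℝ 𝓗) (hRf : 2 / m * ‖A 0 - f‖ ≤ R) :
    ∃ u : 𝓗, ‖u‖ ≤ R ∧ A u = f := by
  have hM : (0 : ℝ) < M := lt_of_lt_of_le hm hmM
  set t : ℝ := m / M ^ 2 with ht_def
  have ht : 0 < t := div_pos hm (by positivity)
  set J := (InnerProductSpace.toDual ℝ 𝓗).symm with hJ
  have hJnorm : ∀ φ : StrongDual ℝ 𝓗, ‖J φ‖ = ‖φ‖ := fun φ => J.norm_map φ
  have hJinner : ∀ (φ : StrongDual ℝ 𝓗) (x : 𝓗), ⟪J φ, x⟫ = φ x := fun φ x =>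
    InnerProductSpace.toDual_symm_apply
  set T : 𝓗 → 𝓗 := fun u => u - t • J (A u - f) with hT
  -- contraction constant
  set k : ℝ := Real.sqrt (1 - m ^ 2 / M ^ 2) with hk_def
  have hc0 : (0:ℝ) ≤ 1 - m ^ 2 / M ^ 2 := by
    rw [sub_nonneg, div_le_one (by positivity)]
    exact pow_le_pow_left₀ hm.le hmM 2
  have hk0 : 0 ≤ k := Real.sqrt_nonneg _
  have hksq : k ^ 2 = 1 - m ^ 2 / M ^ 2 := Real.sq_sqrt hc0
  have hk1 : k < 1 := aux_sqrt_lt_one hm hmM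
  -- the contraction estimate (squared)
  have hcontr : ∀ u v : 𝓗, ‖u‖ ≤ R → ‖v‖ ≤ R → ‖T u - T v‖ ≤ k * ‖u - v‖ := by
    intro u v hu hv
    have hTdiff : T u - T v = (u - v) - t • J (A u - A v) := by
      have hJd : J (A u - A v) = J (A u - f) - J (A v - f) := by
        rw [← map_sub]; congr 1; abel
      simp only [hT]
      rw [hJd, smul_sub]
      abel
    have hnormsq : ‖T u - T v‖ ^ 2
        = ‖u - v‖ ^ 2 - 2 * t * ⟪J (A u - A v), u - v⟫ + t ^ 2 * ‖A u - A v‖ ^ 2 := by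
      rw [hTdiff, @norm_sub_sq_real 𝓗]
      rw [real_inner_comm, real_inner_smul_left, norm_smul, Real.norm_eq_abs,
        abs_of_pos ht, hJnorm]
      ring
    have hmlb : m * ‖u - v‖ ^ 2 ≤ ⟪J (A u - A v), u - v⟫ := by
      rw [hJinner]; exact hmono u v
    have hMub : ‖A u - A v‖ ^ 2 ≤ M ^ 2 * ‖u - v‖ ^ 2 := by
      have h1 := hlip u v hu hv
      have h2 : (0:ℝ) ≤ ‖A u - A v‖ := norm_nonneg _
      nlinarith [norm_nonneg (u - v)]
    have hsq : ‖T u - T v‖ ^ 2 ≤ k ^ 2 * ‖u - v‖ ^ 2 := by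
      rw [hnormsq, hksq]
      have e1 : 2 * t * ⟪J (A u - A v), u - v⟫ ≥ 2 * t * (m * ‖u - v‖ ^ 2) := by
        apply mul_le_mul_of_nonneg_left hmlb (by positivity)
      have e2 : t ^ 2 * ‖A u - A v‖ ^ 2 ≤ t ^ 2 * (M ^ 2 * ‖u - v‖ ^ 2) :=
        mul_le_mul_of_nonneg_left hMub (by positivity)
      have e4 : (1 - m ^ 2 / M ^ 2) * ‖u - v‖ ^ 2
          = ‖u - v‖ ^ 2 - 2 * t * (m * ‖u - v‖ ^ 2) + t ^ 2 * (M ^ 2 * ‖u - v‖ ^ 2) := by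
        rw [ht_def]; field_simp; ring
      linarith [e1, e2, e4.ge, e4.le]
    calc ‖T u - T v‖ = Real.sqrt (‖T u - T v‖ ^ 2) := (Real.sqrt_sq (norm_nonneg _)).symm
      _ ≤ Real.sqrt (k ^ 2 * ‖u - v‖ ^ 2) := Real.sqrt_le_sqrt hsq
      _ = k * ‖u - v‖ := by
          rw [Real.sqrt_mul (by positivity), Real.sqrt_sq hk0, Real.sqrt_sq (norm_nonneg _)]
  -- T maps the ball into itself
  have hA0f : ‖A 0 - f‖ ≤ m * R / 2 := by
    have h2 : 2 * ‖A 0 - f‖ ≤ m * R := by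
      calc 2 * ‖A 0 - f‖ = m * (2 / m * ‖A 0 - f‖) := by field_simp
        _ ≤ m * R := mul_le_mul_of_nonneg_left hRf hm.le
    linarith
  have hT0 : ‖T 0‖ ≤ m ^ 2 * R / (2 * M ^ 2) := by
    have : T 0 = - (t • J (A 0 - f)) := by simp [hT]
    rw [this, norm_neg, norm_smul, Real.norm_eq_abs, abs_of_pos ht, hJnorm]
    calc t * ‖A 0 - f‖ ≤ t * (m * R / 2) := mul_le_mul_of_nonneg_left hA0f ht.le
      _ = m ^ 2 * R / (2 * M ^ 2) := by rw [ht_def]; field_simp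
  have hkbound : k ≤ 1 - m ^ 2 / (2 * M ^ 2) := aux_sqrt_bound hm hmM
  have hmaps : ∀ u : 𝓗, ‖u‖ ≤ R → ‖T u‖ ≤ R := by
    intro u hu
    have h0 : ‖(0:𝓗)‖ ≤ R := by simp [hR.le]
    calc ‖T u‖ ≤ ‖T u - T 0‖ + ‖T 0‖ := by
          simpa using norm_add_le (T u - T 0) (T 0)
      _ ≤ k * ‖u - 0‖ + m ^ 2 * R / (2 * M ^ 2) := add_le_add (hcontr u 0 hu h0) hT0
      _ = k * ‖u‖ + m ^ 2 * R / (2 * M ^ 2) := by rw [sub_zero]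
      _ ≤ (1 - m ^ 2 / (2 * M ^ 2)) * R + m ^ 2 / (2 * M ^ 2) * R := by
          have : k * ‖u‖ ≤ (1 - m ^ 2 / (2 * M ^ 2)) * R := by
            calc k * ‖u‖ ≤ k * R := mul_le_mul_of_nonneg_left hu hk0
              _ ≤ (1 - m ^ 2 / (2 * M ^ 2)) * R := mul_le_mul_of_nonneg_right hkbound hR.le
          have e : m ^ 2 * R / (2 * M ^ 2) = m ^ 2 / (2 * M ^ 2) * R := by ring
          linarith [e ▸ le_refl (m ^ 2 * R / (2 * M ^ 2))]
      _ = R := by ring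
  -- set up the fixed point on the closed ball
  have hSclosed : IsClosed (Metric.closedBall (0:𝓗) R) := Metric.isClosed_closedBall
  haveI : CompleteSpace (Metric.closedBall (0:𝓗) R) := hSclosed.completeSpace_coe
  haveI : Nonempty (Metric.closedBall (0:𝓗) R) :=
    ⟨⟨0, by simp [Metric.mem_closedBall, hR.le]⟩⟩
  let T' : Metric.closedBall (0:𝓗) R → Metric.closedBall (0:𝓗) R := fun x =>
    ⟨T x, by
      rw [Metric.mem_closedBall, dist_zero_right]
      exact hmaps x (by
        have := x.2
        rwa [Metric.mem_closedBall, dist_zero_right] at this)⟩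
  have hcw : ContractingWith ⟨k, hk0⟩ T' := by
    constructor
    · exact_mod_cast hk1
    · apply LipschitzWith.of_dist_le_mul
      intro x y
      rw [Subtype.dist_eq, Subtype.dist_eq, dist_eq_norm, dist_eq_norm]
      have hx : ‖(x:𝓗)‖ ≤ R := by
        have := x.2; rwa [Metric.mem_closedBall, dist_zero_right] at this
      have hy : ‖(y:𝓗)‖ ≤ R := by
        have := y.2; rwa [Metric.mem_closedBall, dist_zero_right] at this
      exact hcontr x y hx hy
  let u : Metric.closedBall (0:𝓗) R := ContractingWith.fixedPoint T' hcw
  have hufix : T' u = u := hcw.fixedPoint_isFixedPt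
  have hufix' : (u : 𝓗) - t • J (A (u : 𝓗) - f) = (u : 𝓗) := congrArg Subtype.val hufix
  have hzero : t • J (A (u : 𝓗) - f) = 0 := sub_eq_self.mp hufix'
  have hJzero : J (A (u : 𝓗) - f) = 0 := by
    rcases smul_eq_zero.mp hzero with h | h
    · exact absurd h ht.ne'
    · exact h
  have hAf : A (u : 𝓗) = f := by
    have h0 : A (u : 𝓗) - f = 0 := J.injective (by rw [map_zero]; exact hJzero)
    rw [sub_eq_zero] at h0; exact h0
  refine ⟨u, ?_, hAf⟩
  have := u.2
  rwa [Metric.mem_closedBall, dist_zero_right] at this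

/-- **Lipschitz dependence of the solution on the right-hand side.** -/
theorem solutions_depend_lipschitz_on_data
    {𝓗 : Type*} [NormedAddCommGroup 𝓗] [InnerProductSpace ℝ 𝓗] [CompleteSpace 𝓗]
    (m : ℝ) (hm : 0 < m) (A : 𝓗 → StrongDual ℝ 𝓗)
    (hmono : ∀ u v : 𝓗, m * ‖u - v‖ ^ 2 ≤ (A u - A v) (u - v))
    (R : ℝ) (hR : 0 < R) (M : ℝ) (hmM : m ≤ M)
    (hlip : ∀ u v : 𝓗, ‖u‖ ≤ R → ‖v‖ ≤ R → ‖A u - A v‖ ≤ M * ‖u - v‖)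
    (f g : StrongDual ℝ 𝓗)
    (hRf : 2 / m * ‖A 0 - f‖ ≤ R) (hRg : 2 / m * ‖A 0 - g‖ ≤ R) :
    ∃ u v : 𝓗, ‖u‖ ≤ R ∧ ‖v‖ ≤ R ∧ A u = f ∧ A v = g ∧
      (∀ w : 𝓗, ‖w‖ ≤ R → A w = f → w = u) ∧
      (∀ w : 𝓗, ‖w‖ ≤ R → A w = g → w = v) ∧
      ‖u - v‖ ≤ 1 / m * ‖f - g‖ := by
  obtain ⟨u, hu, hAu⟩ := exists_solution_in_ball m hm A hmono R hR M hmM hlip f hRf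
  obtain ⟨v, hv, hAv⟩ := exists_solution_in_ball m hm A hmono R hR M hmM hlip g hRg
  have uniq : ∀ w z : 𝓗, A w = A z → w = z := by
    intro w z h
    have h1 := hmono w z
    rw [h, sub_self] at h1
    simp only [ContinuousLinearMap.zero_apply] at h1
    have h2 : ‖w - z‖ ^ 2 ≤ 0 := by
      have h1' : m * ‖w - z‖ ^ 2 ≤ m * 0 := by rw [mul_zero]; exact h1
      exact le_of_mul_le_mul_left h1' hm
    have h3 : ‖w - z‖ ^ 2 = 0 := le_antisymm h2 (sq_nonneg _)
    have h4 : ‖w - z‖ = 0 := by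
      have : (2:ℕ) ≠ 0 := by norm_num
      exact pow_eq_zero_iff this |>.mp h3
    exact sub_eq_zero.mp (norm_eq_zero.mp h4)
  have h1 := hmono u v
  rw [hAu, hAv] at h1
  have hb : (f - g) (u - v) ≤ ‖f - g‖ * ‖u - v‖ :=
    le_trans (le_abs_self _) ((f - g).le_opNorm (u - v))
  have key : m * ‖u - v‖ ≤ ‖f - g‖ := by
    rcases eq_or_lt_of_le (norm_nonneg (u - v)) with h0 | h0
    · rw [← h0, mul_zero]; exact norm_nonneg _
    · nlinarith [h1, hb, h0]
  refine ⟨u, v, hu, hv, hAu, hAv,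
    fun w _ hw => uniq w u (hw.trans hAu.symm),
    fun w _ hw => uniq w v (hw.trans hAv.symm), ?_⟩
  calc ‖u - v‖ = m * ‖u - v‖ / m := by field_simp
    _ ≤ ‖f - g‖ / m := by
        gcongr
    _ = 1 / m * ‖f - g‖ := by ring
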